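/- Let l ≥ 1 and x ≥ 1 be integers. Then the number of subgroups of the abelian group (C_2)^{l−1} × C_{2^x} (the direct product of l−1 copies of the cyclic group of order 2 with a cyclic group of order 2^x) equals Σ_l := Σ_{k=0}^{l−1} (2^{l−(k+1)} x + 1) ∏_{i=1}^{k} (2^{l−i} − 1)/(2^i − 1), where the empty product (k = 0) equals 1. -/

import Mathlib

open Subgroup Finset

namespace CountSub

instance (priority := low) finiteHom {A B : Type*} [Group A] [Group B] [Finite A] [Finite B] :
    Finite (A →* B) := Finite.of_injective _ DFunLike.coe_injective

variable {G H : Type*} [CommGroup G] [CommGroup H]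

variable (A : Subgroup G) (B : Subgroup H) (φ : B →* G ⧸ A)

/-- auxiliary hom `(g, b) ↦ g * (φ b)⁻¹` -/
def psi : G × B →* G ⧸ A :=
  ((QuotientGroup.mk' A).comp (MonoidHom.fst G B)) * ((φ.comp (MonoidHom.snd G B)))⁻¹

lemma psi_apply (g : G) (b : B) : psi A B φ (g, b) = (g : G ⧸ A) * (φ b)⁻¹ := rfl

/-- the subgroup of `G × H` associated to the data `(A, B, φ)` -/
def mkSub : Subgroup (G × H) :=
  ((psi A B φ).ker).map ((MonoidHom.id G).prodMap B.subtype)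

lemma mem_mkSub {g : G} {h : H} :
    (g, h) ∈ mkSub A B φ ↔ ∃ hb : h ∈ B, (g : G ⧸ A) = φ ⟨h, hb⟩ := by
  constructor
  · rintro ⟨⟨g', b⟩, hker, heq⟩
    simp only [MonoidHom.coe_prodMap, Prod.map, MonoidHom.id_apply, Prod.mk.injEq] at heq
    obtain ⟨rfl, hb⟩ := heq
    have hker' : psi A B φ (g', b) = 1 := hker
    rw [psi_apply, mul_inv_eq_one] at hker'
    subst hb
    exact ⟨b.2, by rwa [show (⟨B.subtype b, b.2⟩ : B) = b from Subtype.ext rfl]⟩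
  · rintro ⟨hb, he⟩
    exact ⟨(g, ⟨h, hb⟩), by simp [MonoidHom.mem_ker, psi_apply, he], rfl⟩

lemma mem_mkSub_fst {g : G} : (g, (1 : H)) ∈ mkSub A B φ ↔ g ∈ A := by
  rw [mem_mkSub]
  constructor
  · rintro ⟨hb, he⟩
    rw [show (⟨1, hb⟩ : B) = 1 from rfl, map_one] at he
    rwa [QuotientGroup.eq_one_iff] at he
  · intro hg
    exact ⟨B.one_mem, by rw [show (⟨1, B.one_mem⟩ : B) = 1 from rfl, map_one,
      QuotientGroup.eq_one_iff]; exact hg⟩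

lemma exists_mem_mkSub_snd {h : H} : (∃ g, (g, h) ∈ mkSub A B φ) ↔ h ∈ B := by
  constructor
  · rintro ⟨g, hg⟩
    exact (mem_mkSub A B φ).1 hg |>.1
  · intro hb
    refine ⟨(φ ⟨h, hb⟩).out, (mem_mkSub A B φ).2 ⟨hb, ?_⟩⟩
    exact QuotientGroup.out_eq' _

lemma card_mkSub [Finite G] [Finite H] :
    Nat.card (mkSub A B φ) = Nat.card A * Nat.card B := by
  have hinj : Function.Injective ((MonoidHom.id G).prodMap B.subtype) := by
    intro p q hpq
    simp only [MonoidHom.coe_prodMap, Prod.map, MonoidHom.id_apply, Prod.ext_iff,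
      coe_subtype] at hpq ⊢
    exact ⟨hpq.1, Subtype.ext hpq.2⟩
  have h0 : Nat.card (mkSub A B φ) = Nat.card (psi A B φ).ker :=
    (Nat.card_congr (Subgroup.equivMapOfInjective _ _ hinj).toEquiv).symm
  have hsurj : Function.Surjective (psi A B φ) := by
    intro q
    obtain ⟨g, rfl⟩ := QuotientGroup.mk'_surjective A q
    exact ⟨(g, 1), by simp [psi_apply]⟩
  have h1 : Nat.card (G × B) = Nat.card ((G × B) ⧸ (psi A B φ).ker) * Nat.card (psi A B φ).ker :=
    Subgroup.card_eq_card_quotient_mul_card_subgroup _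
  have h2 : Nat.card ((G × B) ⧸ (psi A B φ).ker) = Nat.card (G ⧸ A) :=
    Nat.card_congr (QuotientGroup.quotientKerEquivOfSurjective _ hsurj).toEquiv
  have h3 : Nat.card G = Nat.card (G ⧸ A) * Nat.card A :=
    Subgroup.card_eq_card_quotient_mul_card_subgroup A
  have h4 : Nat.card (G × B) = Nat.card G * Nat.card B := Nat.card_prod _ _
  have hq : 0 < Nat.card (G ⧸ A) := Nat.card_pos
  rw [h0]
  apply Nat.eq_of_mul_eq_mul_left hq
  rw [h2] at h1
  rw [← h1, h4, h3]
  ring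

lemma mkSub_injective :
    Function.Injective
      (fun t : Σ A : Subgroup G, Σ B : Subgroup H, (B →* G ⧸ A) => mkSub t.1 t.2.1 t.2.2) := by
  rintro ⟨A, B, φ⟩ ⟨A', B', φ'⟩ hEq
  simp only at hEq
  obtain rfl : A = A' := by
    ext g
    rw [← mem_mkSub_fst A B φ, hEq, mem_mkSub_fst]
  obtain rfl : B = B' := by
    ext h
    rw [← exists_mem_mkSub_snd A B φ, hEq, exists_mem_mkSub_snd]
  suffices hφ : φ = φ' by rw [hφ]
  ext b
  have hmem : ((φ b).out, (b : H)) ∈ mkSub A B φ :=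
    (mem_mkSub A B φ).2 ⟨b.2, by rw [QuotientGroup.out_eq']⟩
  rw [hEq] at hmem
  obtain ⟨hb', he⟩ := (mem_mkSub A B φ').1 hmem
  rw [show (⟨(b : H), hb'⟩ : B) = b from Subtype.ext rfl] at he
  rw [← he, QuotientGroup.out_eq']

lemma mkSub_surjective :
    Function.Surjective
      (fun t : Σ A : Subgroup G, Σ B : Subgroup H, (B →* G ⧸ A) => mkSub t.1 t.2.1 t.2.2) := by
  intro K
  set A : Subgroup G := K.comap (MonoidHom.inl G H) with hA
  set B : Subgroup H := K.map (MonoidHom.snd G H) with hB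
  set p : K →* B := (MonoidHom.snd G H).subgroupMap K with hp
  set q : K →* G ⧸ A := (QuotientGroup.mk' A).comp ((MonoidHom.fst G H).comp K.subtype) with hq
  have hker : p.ker ≤ q.ker := by
    rintro ⟨⟨g, h⟩, hgh⟩ hpk
    have hh : h = 1 := congrArg Subtype.val hpk
    subst hh
    simp only [MonoidHom.mem_ker, hq, MonoidHom.comp_apply, QuotientGroup.mk'_apply,
      QuotientGroup.eq_one_iff]
    exact hgh
  let e : (K ⧸ p.ker) ≃* B :=
    QuotientGroup.quotientKerEquivOfSurjective p ((MonoidHom.snd G H).subgroupMap_surjective K)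
  set φ : B →* G ⧸ A := (QuotientGroup.lift p.ker q hker).comp e.symm.toMonoidHom with hφ
  have key : ∀ k : K, φ (p k) = q k := by
    intro k
    have h1 : e (QuotientGroup.mk k) = p k := rfl
    have h2 : e.symm (p k) = QuotientGroup.mk k := by rw [← h1, MulEquiv.symm_apply_apply]
    simp only [hφ, MonoidHom.comp_apply, MulEquiv.coe_toMonoidHom, h2]
    exact QuotientGroup.lift_mk' _ _ _
  refine ⟨⟨A, B, φ⟩, ?_⟩
  ext ⟨g, h⟩
  rw [mem_mkSub]
  constructor
  · rintro ⟨hb, he⟩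
    have hb2 := hb
    obtain ⟨⟨g₀, h₀⟩, hx, hxe⟩ := hb2
    simp only [MonoidHom.coe_snd] at hxe
    subst hxe
    have hk := key ⟨(g₀, h₀), hx⟩
    have hpk : p ⟨(g₀, h₀), hx⟩ = ⟨h₀, ⟨(g₀, h₀), hx, rfl⟩⟩ := Subtype.ext rfl
    rw [hpk] at hk
    rw [show (⟨h₀, hb⟩ : B) = ⟨h₀, ⟨(g₀, h₀), hx, rfl⟩⟩ from Subtype.ext rfl, hk] at he
    have hgA : g₀⁻¹ * g ∈ A := by
      rw [← QuotientGroup.eq]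
      exact (he.symm : q ⟨(g₀, h₀), hx⟩ = _)
    have hmem : ((g₀⁻¹ * g, 1) : G × H) ∈ K := hgA
    have := K.mul_mem hx hmem
    simpa [mul_inv_cancel_left] using this
  · intro hgh
    refine ⟨⟨(g, h), hgh, rfl⟩, ?_⟩
    have hk := key ⟨(g, h), hgh⟩
    have hpk : p ⟨(g, h), hgh⟩ = ⟨h, ⟨(g, h), hgh, rfl⟩⟩ := Subtype.ext rfl
    rw [hpk] at hk
    exact hk.symm

lemma sum_f [Finite G] [Finite H] (f : ℕ → ℚ)
    [Fintype (Subgroup (G × H))] [Fintype (Subgroup G)] [Fintype (Subgroup H)]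
    [∀ (A : Subgroup G) (B : Subgroup H), Fintype (B →* G ⧸ A)] :
    ∑ K : Subgroup (G × H), f (Nat.card K) =
      ∑ A : Subgroup G, ∑ B : Subgroup H,
        (Nat.card (B →* G ⧸ A) : ℚ) * f (Nat.card A * Nat.card B) := by
  classical
  rw [← Equiv.sum_comp (Equiv.ofBijective _ ⟨mkSub_injective, mkSub_surjective⟩)
    (fun K : Subgroup (G × H) => f (Nat.card K))]
  rw [← Finset.univ_sigma_univ, Finset.sum_sigma]
  refine Finset.sum_congr rfl fun A _ => ?_
  rw [← Finset.univ_sigma_univ, Finset.sum_sigma]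
  refine Finset.sum_congr rfl fun B _ => ?_
  refine (Finset.sum_congr rfl fun s _ => congrArg f (card_mkSub A B s)).trans ?_
  rw [Finset.sum_const, nsmul_eq_mul]
  norm_num [Nat.card_eq_fintype_card]



/-- hom set from a group with a generator -/
noncomputable def homEquivOfGen {Gc W : Type*} [Group Gc] [Group W] {g : Gc}
    (hg : ∀ x, x ∈ Subgroup.zpowers g) : (Gc →* W) ≃ {w : W // w ^ orderOf g = 1} where
  toFun f := ⟨f g, by rw [← map_pow, pow_orderOf_eq_one, map_one]⟩
  invFun w := monoidHomOfForallMemZpowers hg (orderOf_dvd_of_pow_eq_one w.2)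
  left_inv f := ((MonoidHom.eq_iff_eq_on_generator hg _ f).2
    (monoidHomOfForallMemZpowers_apply_gen hg _))
  right_inv w := Subtype.ext (monoidHomOfForallMemZpowers_apply_gen hg _)

lemma card_hom_of_cyclic {Gc W : Type*} [Group Gc] [Finite Gc] [IsCyclic Gc] [Group W]
    (hW : ∀ w : W, w ^ 2 = 1) (hG : 2 ∣ Nat.card Gc) : Nat.card (Gc →* W) = Nat.card W := by
  obtain ⟨g, hg⟩ := IsCyclic.exists_generator (α := Gc)
  have horder : orderOf g = Nat.card Gc := by
    rw [← Nat.card_zpowers, (Subgroup.eq_top_iff' _).2 hg, Subgroup.card_top]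
  rw [Nat.card_congr (homEquivOfGen hg)]
  obtain ⟨m, hm⟩ := hG
  have hall : ∀ w : W, w ^ orderOf g = 1 := by
    intro w
    rw [horder, hm, pow_mul, hW, one_pow]
  rw [Nat.card_congr (Equiv.subtypeUnivEquiv hall)]

lemma card_hom_of_subsingleton {Gc W : Type*} [Group Gc] [Group W] [Subsingleton Gc] :
    Nat.card (Gc →* W) = 1 := by
  have : Subsingleton (Gc →* W) := ⟨fun f g => by
    ext a
    rw [Subsingleton.elim a 1, map_one, map_one]⟩
  exact Nat.card_eq_one_iff_unique.2 ⟨this, ⟨1⟩⟩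

lemma exp2_pi (n : ℕ) : ∀ w : (Fin n → Multiplicative (ZMod 2)), w ^ 2 = 1 := by
  intro w
  funext i
  show (w i) ^ 2 = 1
  rw [pow_two, ← ofAdd_toAdd (w i), ← ofAdd_add, CharTwo.add_self_eq_zero, ofAdd_zero]

lemma exp2_quot {G : Type*} [CommGroup G] (hG : ∀ g : G, g ^ 2 = 1) (A : Subgroup G) :
    ∀ w : G ⧸ A, w ^ 2 = 1 := by
  intro w
  induction w using QuotientGroup.induction_on with
  | H g => rw [← QuotientGroup.mk_pow, hG g, QuotientGroup.mk_one]

lemma exp2_subgroup {G : Type*} [CommGroup G] (hG : ∀ g : G, g ^ 2 = 1) (B : Subgroup G) :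
    ∀ b : B, b ^ 2 = 1 := fun b => Subtype.ext (hG b)

section C2

abbrev C2 := Multiplicative (ZMod 2)

lemma card_C2 : Nat.card C2 = 2 := by
  rw [Nat.card_congr Multiplicative.toAdd, Nat.card_zmod]

lemma subgroup_C2 (K : Subgroup C2) : K = ⊥ ∨ K = ⊤ := by
  have hdvd : Nat.card K ∣ 2 := by
    have := Subgroup.card_subgroup_dvd_card K
    rwa [card_C2] at this
  rcases (Nat.dvd_prime Nat.prime_two).1 hdvd with h | h
  · exact Or.inl (Subgroup.card_eq_one.1 h)
  · exact Or.inr (Subgroup.eq_top_of_card_eq K (h.trans card_C2.symm))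

lemma sum_subgroups_C2 [Fintype (Subgroup C2)] (F : Subgroup C2 → ℚ) :
    ∑ K : Subgroup C2, F K = F ⊥ + F ⊤ := by
  classical
  have huniv : (univ : Finset (Subgroup C2)) = ({⊥, ⊤} : Finset (Subgroup C2)) := by
    ext K
    simp only [mem_univ, true_iff, Finset.mem_insert, Finset.mem_singleton]
    exact subgroup_C2 K
  rw [huniv, Finset.sum_pair]
  exact bot_ne_top

lemma card_top_C2 : Nat.card (⊤ : Subgroup C2) = 2 := by
  rw [Subgroup.card_top, card_C2]

end C2

section Cyc

variable (x : ℕ)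

abbrev Cx := Multiplicative (ZMod (2 ^ x))

lemma card_Cx : Nat.card (Cx x) = 2 ^ x := by
  rw [Nat.card_congr Multiplicative.toAdd, Nat.card_zmod]

/-- the `2^k`-torsion subgroup -/
def tors (k : ℕ) : Subgroup (Cx x) where
  carrier := {g | g ^ (2 ^ k) = 1}
  one_mem' := one_pow _
  mul_mem' := fun {a b} ha hb => by
    simp only [Set.mem_setOf_eq] at ha hb ⊢
    rw [mul_pow, ha, hb, one_mul]
  inv_mem' := fun {a} ha => by
    simp only [Set.mem_setOf_eq] at ha ⊢
    rw [inv_pow, ha, inv_one]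

lemma mem_tors {k : ℕ} {g : Cx x} : g ∈ tors x k ↔ g ^ (2 ^ k) = 1 := Iff.rfl

instance : NeZero (2 ^ x) := ⟨by positivity⟩

lemma card_tors {k : ℕ} (hk : k ≤ x) : Nat.card (tors x k) = 2 ^ k := by
  classical
  have hle : Nat.card (tors x k) ≤ 2 ^ k := by
    have hcy := IsCyclic.card_pow_eq_one_le (α := Cx x) (n := 2 ^ k) (by positivity)
    have h1 : Nat.card (tors x k) = Nat.card {g : Cx x // g ^ (2 ^ k) = 1} := rfl
    rw [h1, Nat.card_eq_fintype_card, Fintype.card_subtype]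
    convert hcy using 2
  have hge : 2 ^ k ≤ Nat.card (tors x k) := by
    set a : Cx x := Multiplicative.ofAdd ((2 ^ (x - k) : ℕ) : ZMod (2 ^ x)) with ha
    have horder : orderOf a = 2 ^ k := by
      rw [ha, orderOf_ofAdd_eq_addOrderOf, ZMod.addOrderOf_coe _ (by positivity),
        Nat.gcd_eq_right (pow_dvd_pow 2 (Nat.sub_le x k)), Nat.pow_div (Nat.sub_le x k) two_pos]
      congr 1
      omega
    have hsub : Subgroup.zpowers a ≤ tors x k := by
      rintro b ⟨m, rfl⟩
      rw [mem_tors]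
      have h1 : a ^ (2 ^ k) = 1 := horder ▸ pow_orderOf_eq_one a
      calc (a ^ m) ^ (2 ^ k : ℕ) = (a ^ (2 ^ k : ℕ)) ^ m := by
            rw [← zpow_natCast, ← zpow_mul, mul_comm, zpow_mul, zpow_natCast]
        _ = 1 := by rw [h1, one_zpow]
    calc 2 ^ k = Nat.card (Subgroup.zpowers a) := by rw [Nat.card_zpowers, horder]
      _ ≤ Nat.card (tors x k) := Subgroup.card_le_of_le hsub
  omega

lemma eq_tors (B : Subgroup (Cx x)) : ∃ k, k ≤ x ∧ B = tors x k := by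
  have hdvd : Nat.card B ∣ 2 ^ x := by
    have := Subgroup.card_subgroup_dvd_card B
    rwa [card_Cx] at this
  obtain ⟨k, hk, hcard⟩ := (Nat.dvd_prime_pow Nat.prime_two).1 hdvd
  refine ⟨k, hk, ?_⟩
  have hle : B ≤ tors x k := by
    intro b hb
    rw [mem_tors]
    have h1 : (⟨b, hb⟩ : B) ^ (2 ^ k) = 1 := by
      rw [← hcard]
      exact pow_card_eq_one'
    exact congrArg Subtype.val h1
  exact Subgroup.eq_of_le_of_card_ge hle (by rw [card_tors x hk, hcard])

lemma tors_bijective : Function.Bijective (fun k : Fin (x + 1) => tors x k) := by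
  constructor
  · intro k₁ k₂ h
    have : (2 : ℕ) ^ (k₁ : ℕ) = 2 ^ (k₂ : ℕ) := by
      rw [← card_tors x (Nat.lt_succ_iff.1 k₁.2), ← card_tors x (Nat.lt_succ_iff.1 k₂.2)]
      exact congrArg (fun B : Subgroup (Cx x) => Nat.card B) h
    exact Fin.ext (Nat.pow_right_injective le_rfl this)
  · intro B
    obtain ⟨k, hk, hB⟩ := eq_tors x B
    exact ⟨⟨k, Nat.lt_succ_of_le hk⟩, hB.symm⟩

lemma sum_subgroups_Cx [Fintype (Subgroup (Cx x))] (F : Subgroup (Cx x) → ℚ) :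
    ∑ B : Subgroup (Cx x), F B = ∑ k ∈ Finset.range (x + 1), F (tors x k) := by
  rw [← Fin.sum_univ_eq_sum_range (fun k => F (tors x k)) (x + 1)]
  exact (Equiv.sum_comp (Equiv.ofBijective _ (tors_bijective x)) F).symm

lemma tors_zero : tors x 0 = ⊥ :=
  Subgroup.card_eq_one.1 (by rw [card_tors x (Nat.zero_le x)]; norm_num)

end Cyc

/-! ### Gaussian binomial coefficients (base 2, as rationals) -/

def gc (n k : ℕ) : ℚ :=
  (∏ i ∈ Finset.range k, ((2:ℚ) ^ (n - i) - 1)) / (∏ i ∈ Finset.range k, ((2:ℚ) ^ (i + 1) - 1))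

lemma fac_ne_zero (m : ℕ) : ((2:ℚ) ^ (m + 1) - 1) ≠ 0 := by
  have h : (1:ℚ) < 2 ^ (m + 1) := one_lt_pow₀ (by norm_num) (Nat.succ_ne_zero m)
  linarith

lemma den_ne_zero (k : ℕ) : (∏ i ∈ Finset.range k, ((2:ℚ) ^ (i + 1) - 1)) ≠ 0 :=
  Finset.prod_ne_zero_iff.2 fun i _ => fac_ne_zero i

lemma gc_zero (n : ℕ) : gc n 0 = 1 := by simp [gc]

lemma gc_top (n : ℕ) : gc n (n + 1) = 0 := by
  unfold gc
  rw [Finset.prod_eq_zero (Finset.self_mem_range_succ n)]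
  · simp
  · rw [Nat.sub_self]
    norm_num

lemma gc_pascal (n j : ℕ) (hj : j ≤ n) :
    gc (n + 1) (j + 1) = gc n (j + 1) + 2 ^ (n - j) * gc n j := by
  unfold gc
  rw [Finset.prod_range_succ' (fun i => ((2:ℚ) ^ (n + 1 - i) - 1)) j]
  rw [Finset.prod_range_succ (fun i => ((2:ℚ) ^ (n - i) - 1)) j]
  rw [Finset.prod_range_succ (fun i => ((2:ℚ) ^ (i + 1) - 1)) j]
  simp only [Nat.succ_sub_succ, Nat.sub_zero]
  set N := ∏ i ∈ Finset.range j, ((2:ℚ) ^ (n - i) - 1) with hN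
  set D := ∏ i ∈ Finset.range j, ((2:ℚ) ^ (i + 1) - 1) with hD
  have hD0 : D ≠ 0 := den_ne_zero j
  have hj0 : ((2:ℚ) ^ (j + 1) - 1) ≠ 0 := fac_ne_zero j
  have hpow : (2:ℚ) ^ (n + 1) = 2 ^ (n - j) * 2 ^ (j + 1) := by
    rw [← pow_add]
    congr 1
    omega
  field_simp
  rw [hpow]
  ring

/-! ### Sums over the subgroup lattice of `(C₂)ⁿ` -/

abbrev VV (n : ℕ) := Fin n → Multiplicative (ZMod 2)

noncomputable def T (n : ℕ) (f : ℕ → ℚ) : ℚ :=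
  letI : Fintype (Subgroup (VV n)) := Fintype.ofFinite _
  ∑ A : Subgroup (VV n), f (Nat.card A)

lemma T_def (n : ℕ) (f : ℕ → ℚ) [inst : Fintype (Subgroup (VV n))] :
    T n f = ∑ A : Subgroup (VV n), f (Nat.card A) := by
  unfold T
  congr!

lemma T_zero (f : ℕ → ℚ) : T 0 f = f 1 := by
  letI : Fintype (Subgroup (VV 0)) := Fintype.ofFinite _
  rw [T_def, Fintype.sum_unique]
  congr 1
  exact Nat.card_eq_one_iff_unique.2 ⟨inferInstance, ⟨1⟩⟩

lemma sum_mulEquiv {G H : Type*} [Group G] [Group H] (e : G ≃* H) (f : ℕ → ℚ)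
    [Fintype (Subgroup G)] [Fintype (Subgroup H)] :
    ∑ K : Subgroup G, f (Nat.card K) = ∑ K : Subgroup H, f (Nat.card K) := by
  rw [← Equiv.sum_comp e.mapSubgroup.toEquiv (fun K : Subgroup H => f (Nat.card K))]
  refine Finset.sum_congr rfl fun K _ => ?_
  congr 1
  exact Nat.card_congr (Subgroup.equivMapOfInjective K e.toMonoidHom e.injective).toEquiv

def splitEquiv (n : ℕ) : VV (n + 1) ≃* (VV n) × C2 :=
  { (Fin.consEquiv (fun _ => C2)).symm.trans (Equiv.prodComm C2 (VV n)) with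
    map_mul' := fun _ _ => rfl }

lemma card_VV (n : ℕ) : Nat.card (VV n) = 2 ^ n := by
  rw [Nat.card_fun, card_C2, Nat.card_eq_fintype_card, Fintype.card_fin]

lemma card_quot_VV (n : ℕ) (A : Subgroup (VV n)) :
    (Nat.card ((VV n) ⧸ A) : ℚ) = 2 ^ n / (Nat.card A : ℚ) := by
  have hA0 : (0:ℚ) < (Nat.card A : ℚ) := by exact_mod_cast Nat.card_pos
  rw [eq_div_iff hA0.ne']
  have h := Subgroup.card_eq_card_quotient_mul_card_subgroup A
  rw [card_VV] at h
  exact_mod_cast h.symm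

lemma T_succ (n : ℕ) (f : ℕ → ℚ) :
    T (n + 1) f = T n (fun m => f m + ((2:ℚ) ^ n / (m : ℚ)) * f (2 * m)) := by
  classical
  letI : Fintype (Subgroup (VV (n+1))) := Fintype.ofFinite _
  letI : Fintype (Subgroup (VV n × C2)) := Fintype.ofFinite _
  letI : Fintype (Subgroup (VV n)) := Fintype.ofFinite _
  letI : Fintype (Subgroup C2) := Fintype.ofFinite _
  letI : ∀ (A : Subgroup (VV n)) (B : Subgroup C2), Fintype (B →* (VV n) ⧸ A) :=
    fun _ _ => Fintype.ofFinite _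
  rw [T_def, T_def]
  rw [sum_mulEquiv (splitEquiv n) f]
  rw [sum_f f]
  refine Finset.sum_congr rfl fun A _ => ?_
  rw [sum_subgroups_C2]
  have h1 : Nat.card ((⊥ : Subgroup C2) →* (VV n) ⧸ A) = 1 := card_hom_of_subsingleton
  have h2 : Nat.card ((⊤ : Subgroup C2) →* (VV n) ⧸ A) = Nat.card ((VV n) ⧸ A) :=
    card_hom_of_cyclic (exp2_quot (exp2_pi n) A) (by rw [card_top_C2])
  rw [h1, h2, Subgroup.card_bot, card_top_C2, card_quot_VV]
  push_cast
  ring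

lemma T_closed (n : ℕ) :
    ∀ f : ℕ → ℚ, T n f = ∑ k ∈ Finset.range (n + 1), gc n k * f (2 ^ k) := by
  induction n with
  | zero =>
      intro f
      rw [T_zero, Finset.sum_range_one, gc_zero, pow_zero, one_mul]
  | succ n ih =>
      intro f
      rw [T_succ, ih]
      have hterm : ∀ k ∈ Finset.range (n + 1),
          gc n k * (f (2 ^ k) + ((2:ℚ) ^ n / ((2 ^ k : ℕ) : ℚ)) * f (2 * 2 ^ k))
            = gc n k * f (2 ^ k) + 2 ^ (n - k) * gc n k * f (2 ^ (k + 1)) := by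
        intro k hk
        have hk' : k ≤ n := Nat.lt_succ_iff.1 (Finset.mem_range.1 hk)
        have hdiv : ((2:ℚ) ^ n / ((2 ^ k : ℕ) : ℚ)) = 2 ^ (n - k) := by
          push_cast
          rw [div_eq_iff (by positivity : ((2:ℚ) ^ k) ≠ 0), ← pow_add]
          congr 1
          omega
        rw [hdiv, show 2 * 2 ^ k = 2 ^ (k + 1) from by ring]
        ring
      rw [Finset.sum_congr rfl hterm, Finset.sum_add_distrib]
      rw [Finset.sum_range_succ' (fun k => gc (n + 1) k * f (2 ^ k)) (n + 1)]
      rw [Finset.sum_range_succ' (fun k => gc n k * f (2 ^ k)) n]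
      have hpas : ∀ k ∈ Finset.range (n + 1),
          gc (n + 1) (k + 1) * f (2 ^ (k + 1))
            = gc n (k + 1) * f (2 ^ (k + 1)) + 2 ^ (n - k) * gc n k * f (2 ^ (k + 1)) := by
        intro k hk
        rw [gc_pascal n k (Nat.lt_succ_iff.1 (Finset.mem_range.1 hk))]
        ring
      rw [Finset.sum_congr rfl hpas, Finset.sum_add_distrib]
      rw [Finset.sum_range_succ (fun k => gc n (k + 1) * f (2 ^ (k + 1))) n, gc_top, zero_mul,
        add_zero]
      rw [gc_zero, gc_zero]
      ring

end CountSub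

open CountSub in
/-- Let `l ≥ 1` and `x ≥ 1`.  The number of subgroups of the abelian group
`(C₂)^{l-1} × C_{2^x}` equals
`Σ_l := Σ_{k=0}^{l-1} (2^{l-(k+1)} x + 1) ∏_{i=1}^{k} (2^{l-i} - 1)/(2^i - 1)`,
the empty product (`k = 0`) being `1`.  The products are taken in `ℚ`, reindexed by
`i ↦ i + 1`. -/
theorem card_subgroups_elementary_abelian_times_cyclic
    (l x : ℕ) (hl : 1 ≤ l) (hx : 1 ≤ x) :
    (Nat.card (Subgroup
        ((Fin (l - 1) → Multiplicative (ZMod 2)) × Multiplicative (ZMod (2 ^ x)))) : ℚ) =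
      ∑ k ∈ Finset.range l, ((2 ^ (l - (k + 1)) * (x : ℚ) + 1) *
        ∏ i ∈ Finset.range k, ((2 ^ (l - (i + 1)) - 1 : ℚ) / (2 ^ (i + 1) - 1))) := by
  classical
  obtain ⟨n, rfl⟩ : ∃ n, l = n + 1 := ⟨l - 1, by omega⟩
  simp only [Nat.add_sub_cancel, Nat.add_sub_add_right]
  have hgrp : (Nat.card (Subgroup ((Fin (n + 1 - 1) → Multiplicative (ZMod 2)) ×
      Multiplicative (ZMod (2 ^ x)))) : ℚ) = (Nat.card (Subgroup (VV n × Cx x)) : ℚ) := rfl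
  rw [hgrp]
  letI : Fintype (Subgroup (VV n × Cx x)) := Fintype.ofFinite _
  letI : Fintype (Subgroup (VV n)) := Fintype.ofFinite _
  letI : Fintype (Subgroup (Cx x)) := Fintype.ofFinite _
  letI : ∀ (A : Subgroup (VV n)) (B : Subgroup (Cx x)),
      Fintype (B →* (VV n) ⧸ A) := fun _ _ => Fintype.ofFinite _
  have hcard : (Nat.card (Subgroup (VV n × Cx x)) : ℚ)
      = ∑ K : Subgroup (VV n × Cx x), (1:ℚ) := by
    rw [Nat.card_eq_fintype_card]
    simp
  rw [hcard, sum_f (fun _ => (1:ℚ))]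
  simp only [mul_one]
  have hinner : ∀ A : Subgroup (VV n),
      ∑ B : Subgroup (Cx x), (Nat.card (B →* (VV n) ⧸ A) : ℚ)
        = 1 + (x : ℚ) * (2 ^ n / (Nat.card A : ℚ)) := by
    intro A
    rw [sum_subgroups_Cx x (fun B => (Nat.card (B →* (VV n) ⧸ A) : ℚ))]
    rw [Finset.sum_range_succ' (fun k => (Nat.card ((tors x k) →* (VV n) ⧸ A) : ℚ)) x]
    have h0 : (Nat.card ((tors x 0) →* (VV n) ⧸ A) : ℚ) = 1 := by
      rw [tors_zero, card_hom_of_subsingleton]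
      norm_num
    have hs : ∀ k ∈ Finset.range x,
        (Nat.card ((tors x (k + 1)) →* (VV n) ⧸ A) : ℚ) = 2 ^ n / (Nat.card A : ℚ) := by
      intro k hk
      have hk' : k + 1 ≤ x := Finset.mem_range.1 hk
      rw [card_hom_of_cyclic (exp2_quot (exp2_pi n) A)
        (by rw [card_tors x hk']; exact dvd_pow_self 2 (Nat.succ_ne_zero k))]
      rw [card_quot_VV]
    rw [h0, Finset.sum_congr rfl hs, Finset.sum_const, Finset.card_range]
    push_cast
    ring
  rw [Finset.sum_congr rfl (fun A _ => hinner A)]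
  have hT : ∑ A : Subgroup (VV n), (1 + (x:ℚ) * (2 ^ n / (Nat.card A : ℚ)))
      = T n (fun m => 1 + (x:ℚ) * ((2:ℚ) ^ n / (m : ℚ))) :=
    (T_def n (fun m => 1 + (x:ℚ) * ((2:ℚ) ^ n / (m : ℚ)))).symm
  rw [hT, T_closed]
  refine Finset.sum_congr rfl fun k hk => ?_
  have hk' : k ≤ n := Nat.lt_succ_iff.1 (Finset.mem_range.1 hk)
  have hdiv : ((2:ℚ) ^ n / ((2 ^ k : ℕ) : ℚ)) = 2 ^ (n - k) := by
    push_cast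
    rw [div_eq_iff (by positivity : ((2:ℚ) ^ k) ≠ 0), ← pow_add]
    congr 1
    omega
  rw [hdiv, Finset.prod_div_distrib]
  simp only [gc]
  ring
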